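/- arXiv:hep-th/0308038 — 2 statements merged into one kernel-verified Lean document; each statement's English description precedes it below -/
import Mathlib

section
/- (Fine Tuning.) Let p ∈ ℂ[X] be a polynomial of degree n ≥ 1 all of whose n roots ξ₁, …, ξₙ are distinct (equivalently, all roots are simple). Then for every ε > 0 there exists δ > 0 such that: for every polynomial q ∈ ℂ[X] of degree at most n whose coefficient vector has Euclidean norm less than δ, the polynomial p + q has degree exactly n, all roots of p + q lie in the union ⋃ᵢ B(ξᵢ, ε) of the open discs of radius ε about the ξᵢ, and (if ε is small enough that these discs are pairwise disjoint) each disc B(ξᵢ, ε) contains exactly one root of p + q counted with multiplicity. -/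
open Polynomial
open scoped Classical

private lemma pow_card_le_prod_map (m : Multiset ℂ) (c : ℝ) (hc : 0 ≤ c) (f : ℂ → ℝ)
    (h : ∀ z ∈ m, c ≤ f z) : c ^ Multiset.card m ≤ (m.map f).prod := by
  induction m using Multiset.induction_on with
  | empty => simp
  | cons a t ih =>
    simp only [Multiset.map_cons, Multiset.prod_cons, Multiset.card_cons, pow_succ]
    have h1 : c ≤ f a := h a (Multiset.mem_cons_self a t)
    have h2 : c ^ Multiset.card t ≤ (t.map f).prod :=
      ih (fun z hz => h z (Multiset.mem_cons_of_mem hz))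
    calc c ^ Multiset.card t * c ≤ (t.map f).prod * f a :=
          mul_le_mul h2 h1 hc (le_trans (pow_nonneg hc _) h2)
      _ = f a * (t.map f).prod := mul_comm _ _

private lemma abs_eval_eq (r : Polynomial ℂ) (z : ℂ) :
    ‖r.eval z‖ =
      ‖r.leadingCoeff‖ * ((r.roots.map (fun ξ => ‖z - ξ‖)).prod) := by
  conv_lhs => rw [(IsAlgClosed.splits r).eq_prod_roots]
  rw [eval_mul, eval_C, norm_mul, eval_multiset_prod, Multiset.map_map]
  congr 1
  induction r.roots using Multiset.induction_on with
  | empty => simp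
  | cons b t ih =>
    rw [Multiset.map_cons, Multiset.prod_cons, norm_mul, ih, Multiset.map_cons, Multiset.prod_cons]
    simp

/-- Fine Tuning: Let `p ∈ ℂ[X]` have degree `n ≥ 1` with `n` distinct
roots.  For every `ε > 0` there is `δ > 0` such that for every polynomial `q` of degree
at most `n` whose coefficient vector has Euclidean norm `< δ`, the polynomial `p + q`
has degree exactly `n`, all roots of `p + q` lie within `ε` of some root of `p`, and if
the `ε`-discs about the roots of `p` are pairwise disjoint then each such disc contains
exactly one root of `p + q` counted with multiplicity. -/
theorem fine_tuning (n : ℕ) (hn : 1 ≤ n) (p : Polynomial ℂ)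
    (hdeg : p.natDegree = n) (hdistinct : p.roots.toFinset.card = n) :
    ∀ ε > (0 : ℝ), ∃ δ > (0 : ℝ), ∀ q : Polynomial ℂ, q.degree ≤ (n : WithBot ℕ) →
      Real.sqrt (∑ i ∈ Finset.range (n + 1), ‖q.coeff i‖ ^ 2) < δ →
      (p + q).natDegree = n ∧
      (∀ z ∈ (p + q).roots, ∃ ξ ∈ p.roots, ‖z - ξ‖ < ε) ∧
      ((∀ ξ ∈ p.roots, ∀ ξ' ∈ p.roots, ξ ≠ ξ' →
          Disjoint (Metric.ball ξ ε) (Metric.ball ξ' ε)) →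
        ∀ ξ ∈ p.roots,
          Multiset.card
            ((p + q).roots.filter fun z => z ∈ Metric.ball ξ ε) = 1) := by
  intro ε hε
  have hp0 : p ≠ 0 := by
    intro h
    rw [h, natDegree_zero] at hdeg
    omega
  have hsp : Splits p := IsAlgClosed.splits p
  have hproots : Multiset.card p.roots = n := by
    rw [Polynomial.splits_iff_card_roots.mp hsp, hdeg]
  set a := p.leadingCoeff with ha
  have ha0 : a ≠ 0 := leadingCoeff_ne_zero.mpr hp0
  set A := ‖a‖ with hA
  have hA0 : 0 < A := norm_pos_iff.mpr ha0
  set RB := (p.roots.map (fun z => ‖z‖)).sum with hRB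
  have habsnn : ∀ x ∈ p.roots.map (fun z => ‖z‖), (0:ℝ) ≤ x := by
    intro x hx
    obtain ⟨y, _, rfl⟩ := Multiset.mem_map.mp hx
    exact norm_nonneg y
  have hRB0 : 0 ≤ RB := Multiset.sum_nonneg habsnn
  have hRBle : ∀ ξ ∈ p.roots, ‖ξ‖ ≤ RB := fun ξ hξ =>
    Multiset.single_le_sum habsnn _ (Multiset.mem_map_of_mem _ hξ)
  set M : ℝ := 2 * RB + 2 with hM
  have hM1 : (1:ℝ) ≤ M := by simp only [hM]; linarith
  have hM0 : (0:ℝ) < M := lt_of_lt_of_le one_pos hM1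
  set δ := min (A/2) (min (A/((n+1)*2^n)) (A*ε^n/(2*(n+1)*M^n))) with hδ
  have hδ0 : 0 < δ :=
    lt_min (by positivity) (lt_min (by positivity) (by positivity))
  have hδ1 : δ ≤ A/2 := min_le_left _ _
  have hδ2 : δ ≤ A/((n+1)*2^n) := le_trans (min_le_right _ _) (min_le_left _ _)
  have hδ3 : δ ≤ A*ε^n/(2*(n+1)*M^n) := le_trans (min_le_right _ _) (min_le_right _ _)
  refine ⟨δ, hδ0, ?_⟩
  intro q hqdeg hqnorm
  -- coefficient bounds
  have hqc : ∀ i, ‖q.coeff i‖ < δ := by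
    intro i
    rcases le_or_gt i n with hi | hi
    · have h1 : ‖q.coeff i‖ ^ 2 ≤
          ∑ j ∈ Finset.range (n+1), ‖q.coeff j‖ ^ 2 :=
        Finset.single_le_sum (f := fun j => ‖q.coeff j‖ ^ 2)
          (by intros; positivity) (Finset.mem_range.mpr (by omega))
      have h2 : ‖q.coeff i‖ ≤
          Real.sqrt (∑ j ∈ Finset.range (n+1), ‖q.coeff j‖ ^ 2) := by
        rw [show ‖q.coeff i‖ = Real.sqrt (‖q.coeff i‖ ^ 2) from
          (Real.sqrt_sq (norm_nonneg _)).symm]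
        exact Real.sqrt_le_sqrt h1
      exact lt_of_le_of_lt h2 hqnorm
    · rw [Polynomial.coeff_eq_zero_of_degree_lt
        (lt_of_le_of_lt hqdeg (by exact_mod_cast hi))]
      simpa using hδ0
  have hqnat : q.natDegree ≤ n := natDegree_le_iff_degree_le.mpr hqdeg
  -- evaluation bound for q
  have hqe : ∀ z, ‖q.eval z‖ < δ * ((n+1) * max 1 (‖z‖) ^ n) := by
    intro z
    set B := max 1 (‖z‖) with hB
    have hB1 : (1:ℝ) ≤ B := le_max_left _ _
    have hB0 : (0:ℝ) < B := lt_of_lt_of_le one_pos hB1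
    rw [eval_eq_sum_range' (Nat.lt_succ_of_le hqnat) z]
    calc ‖∑ i ∈ Finset.range (n+1), q.coeff i * z ^ i‖
        ≤ ∑ i ∈ Finset.range (n+1), ‖q.coeff i * z ^ i‖ :=
          norm_sum_le _ _
      _ < ∑ _i ∈ Finset.range (n+1), δ * B ^ n := by
          apply Finset.sum_lt_sum_of_nonempty (by simp)
          intro i hi
          rw [norm_mul, norm_pow]
          have h1 : ‖z‖ ^ i ≤ B ^ i :=
            pow_le_pow_left₀ (norm_nonneg _) (le_max_right _ _) i
          have h2 : B ^ i ≤ B ^ n :=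
            pow_le_pow_right₀ hB1 (Nat.lt_succ_iff.mp (Finset.mem_range.mp hi))
          exact lt_of_le_of_lt
            (mul_le_mul_of_nonneg_left (le_trans h1 h2) (norm_nonneg _))
            (mul_lt_mul_of_pos_right (hqc i) (pow_pos hB0 n))
      _ = δ * ((n+1) * B ^ n) := by
          rw [Finset.sum_const, Finset.card_range, nsmul_eq_mul]
          push_cast
          ring
  -- degree of p + q
  have hpqc : (p + q).coeff n = a + q.coeff n := by
    rw [coeff_add, ← hdeg, coeff_natDegree]
  have hpqc0 : (p + q).coeff n ≠ 0 := by
    rw [hpqc]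
    intro h
    have h1 := norm_add_le (a + q.coeff n) (-(q.coeff n))
    simp only [add_neg_cancel_right, norm_neg] at h1
    rw [h] at h1
    simp only [norm_zero, zero_add] at h1
    have := hqc n
    linarith
  have hdeg' : (p + q).natDegree = n := by
    have hle : (p + q).degree ≤ (n : WithBot ℕ) := by
      refine le_trans (degree_add_le p q) (max_le ?_ hqdeg)
      rw [← hdeg]
      exact degree_le_natDegree
    have h1 : (p + q).natDegree ≤ n := natDegree_le_iff_degree_le.mpr hle
    have h2 : n ≤ (p + q).natDegree := le_natDegree_of_ne_zero hpqc0
    omega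
  have hpq0 : p + q ≠ 0 := by
    intro h
    rw [h, natDegree_zero] at hdeg'
    omega
  -- root bound for p + q
  have hbound : ∀ z : ℂ, (p + q).eval z = 0 → ‖z‖ < M := by
    intro z hz
    by_contra hzM
    push_neg at hzM
    have h1 : (1:ℝ) ≤ ‖z‖ := le_trans hM1 hzM
    have hz2 : ∀ ξ ∈ p.roots, ‖z‖ / 2 ≤ ‖z - ξ‖ := by
      intro ξ hξ
      have hξRB := hRBle ξ hξ
      have habs := norm_add_le (z - ξ) ξ
      simp only [sub_add_cancel] at habs
      have : M ≤ ‖z‖ := hzM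
      rw [hM] at this
      linarith
    have hlow : A * (‖z‖ / 2) ^ n ≤ ‖p.eval z‖ := by
      rw [abs_eval_eq p z, ← ha, ← hA]
      apply mul_le_mul_of_nonneg_left _ (le_of_lt hA0)
      have := pow_card_le_prod_map p.roots (‖z‖ / 2) (by positivity) _ hz2
      rwa [hproots] at this
    have heq : p.eval z = - q.eval z := by
      rw [eval_add] at hz
      linear_combination hz
    have hup : ‖p.eval z‖ < δ * ((n+1) * ‖z‖ ^ n) := by
      rw [heq, norm_neg]
      have := hqe z
      rwa [max_eq_right h1] at this
    have hfin : δ * ((n+1) * ‖z‖ ^ n) ≤ A * (‖z‖ / 2) ^ n := by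
      rw [div_pow]
      have hd2 : δ * ((n+1) * 2^n) ≤ A := by
        rw [← le_div_iff₀ (by positivity)]
        exact hδ2
      have hzn : (0:ℝ) ≤ ‖z‖ ^ n := by positivity
      calc δ * ((n+1) * ‖z‖ ^ n)
          = (δ * ((n+1) * 2^n)) * (‖z‖ ^ n / 2 ^ n) := by
            field_simp
        _ ≤ A * (‖z‖ ^ n / 2 ^ n) := by
            apply mul_le_mul_of_nonneg_right hd2 (by positivity)
    exact absurd (lt_of_le_of_lt hlow hup) (not_lt.mpr hfin)
  -- all roots of p+q are near roots of p
  have hnear : ∀ z ∈ (p + q).roots, ∃ ξ ∈ p.roots, ‖z - ξ‖ < ε := by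
    intro z hzr
    have hz0 : (p + q).eval z = 0 := isRoot_of_mem_roots hzr
    by_contra hcon
    push_neg at hcon
    have hzM := hbound z hz0
    have hlow : A * ε ^ n ≤ ‖p.eval z‖ := by
      rw [abs_eval_eq p z, ← ha, ← hA]
      apply mul_le_mul_of_nonneg_left _ (le_of_lt hA0)
      have := pow_card_le_prod_map p.roots ε (le_of_lt hε) _ hcon
      rwa [hproots] at this
    have heq : p.eval z = - q.eval z := by
      rw [eval_add] at hz0
      linear_combination hz0
    have hup : ‖p.eval z‖ < δ * ((n+1) * max 1 (‖z‖) ^ n) := by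
      rw [heq, norm_neg]
      exact hqe z
    have hBM : max 1 (‖z‖) ≤ M := max_le hM1 (le_of_lt hzM)
    have h2 : δ * ((n+1) * max 1 (‖z‖) ^ n) ≤ δ * ((n+1) * M ^ n) := by
      have : max 1 (‖z‖) ^ n ≤ M ^ n :=
        pow_le_pow_left₀ (le_trans zero_le_one (le_max_left _ _)) hBM n
      apply mul_le_mul_of_nonneg_left _ (le_of_lt hδ0)
      apply mul_le_mul_of_nonneg_left this (by positivity)
    have h3 : δ * ((n+1) * M ^ n) ≤ A * ε ^ n / 2 := by
      have := hδ3
      rw [le_div_iff₀ (by positivity)] at this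
      rw [le_div_iff₀ (by norm_num : (0:ℝ) < 2)]
      calc δ * ((n+1) * M^n) * 2 = δ * (2*(n+1)*M^n) := by ring
        _ ≤ A * ε ^ n := this
    have hpos : (0:ℝ) < A * ε ^ n := by positivity
    linarith [lt_of_le_of_lt hlow hup]
  refine ⟨hdeg', hnear, ?_⟩
  -- counting part
  intro hdisj ξ hξ
  set m' := (p + q).roots with hm'
  have hm'card : Multiset.card m' = n := by
    rw [hm', Polynomial.splits_iff_card_roots.mp (IsAlgClosed.splits (p+q)), hdeg']
  set b := (p + q).leadingCoeff with hb
  have hbval : b = a + q.coeff n := by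
    rw [hb, leadingCoeff, hdeg', hpqc]
  have hbA : A/2 ≤ ‖b‖ := by
    rw [hbval]
    have h1 := norm_add_le (a + q.coeff n) (-(q.coeff n))
    simp only [add_neg_cancel_right, norm_neg] at h1
    have := hqc n
    linarith
  -- at least one root in every ball
  have hone : ∀ ζ ∈ p.roots,
      1 ≤ Multiset.card (m'.filter (fun z => z ∈ Metric.ball ζ ε)) := by
    intro ζ hζ
    by_contra hcard
    have hfil : m'.filter (fun z => z ∈ Metric.ball ζ ε) = 0 :=
      Multiset.card_eq_zero.mp (by omega)
    have hall : ∀ z ∈ m', ε ≤ ‖ζ - z‖ := by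
      intro z hz
      by_contra h
      push_neg at h
      have hball : z ∈ Metric.ball ζ ε := by
        rw [Metric.mem_ball, dist_eq_norm, norm_sub_rev]
        exact h
      have : z ∈ m'.filter (fun z => z ∈ Metric.ball ζ ε) :=
        Multiset.mem_filter.mpr ⟨hz, hball⟩
      rw [hfil] at this
      simp at this
    have hlow : (A/2) * ε ^ n ≤ ‖(p + q).eval ζ‖ := by
      rw [abs_eval_eq (p + q) ζ, ← hb, ← hm']
      have hp1 := pow_card_le_prod_map m' ε (le_of_lt hε) _ hall
      rw [hm'card] at hp1
      calc (A/2) * ε ^ n ≤ ‖b‖ * ε ^ n :=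
            mul_le_mul_of_nonneg_right hbA (by positivity)
        _ ≤ ‖b‖ * ((m'.map (fun z => ‖ζ - z‖)).prod) :=
            mul_le_mul_of_nonneg_left hp1 (norm_nonneg _)
    have heq2 : (p + q).eval ζ = q.eval ζ := by
      rw [eval_add, (isRoot_of_mem_roots hζ : p.eval ζ = 0), zero_add]
    have hup := hqe ζ
    have hζM : max 1 (‖ζ‖) ≤ M :=
      max_le hM1 (le_trans (hRBle ζ hζ) (by rw [hM]; linarith))
    have h2 : δ * ((n+1) * max 1 (‖ζ‖) ^ n) ≤ δ * ((n+1) * M ^ n) := by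
      have : max 1 (‖ζ‖) ^ n ≤ M ^ n :=
        pow_le_pow_left₀ (le_trans zero_le_one (le_max_left _ _)) hζM n
      apply mul_le_mul_of_nonneg_left _ (le_of_lt hδ0)
      apply mul_le_mul_of_nonneg_left this (by positivity)
    have h3 : δ * ((n+1) * M ^ n) ≤ A * ε ^ n / 2 := by
      have := hδ3
      rw [le_div_iff₀ (by positivity)] at this
      rw [le_div_iff₀ (by norm_num : (0:ℝ) < 2)]
      calc δ * ((n+1) * M^n) * 2 = δ * (2*(n+1)*M^n) := by ring
        _ ≤ A * ε ^ n := this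
    rw [heq2] at hlow
    have : A * ε ^ n / 2 = (A/2) * ε ^ n := by ring
    linarith [lt_of_le_of_lt hlow hup]
  -- choice function sending each root of p+q to the root of p it is near
  set f : ℂ → ℂ := fun z =>
    if h : ∃ ζ ∈ p.roots, ‖z - ζ‖ < ε then h.choose else 0 with hf
  have hfspec : ∀ z ∈ m', f z ∈ p.roots ∧ z ∈ Metric.ball (f z) ε := by
    intro z hz
    have h := hnear z hz
    rw [hf]
    simp only [dif_pos h]
    obtain ⟨h1, h2⟩ := h.choose_spec
    refine ⟨h1, ?_⟩
    rw [Metric.mem_ball, dist_eq_norm]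
    exact h2
  have hfilterf : ∀ ζ ∈ p.roots,
      m'.filter (fun z => z ∈ Metric.ball ζ ε) = m'.filter (fun z => ζ = f z) := by
    intro ζ hζ
    apply Multiset.filter_congr
    intro z hz
    obtain ⟨hf1, hf2⟩ := hfspec z hz
    constructor
    · intro hball
      by_contra hne
      have hd := hdisj ζ hζ (f z) hf1 (by intro h; exact hne h)
      exact absurd hf2 (Set.disjoint_left.mp hd hball)
    · intro h
      rw [h]
      exact hf2
  have hsum : ∑ ζ ∈ p.roots.toFinset,
      Multiset.card (m'.filter (fun z => z ∈ Metric.ball ζ ε)) = n := by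
    have h1 : ∀ ζ ∈ p.roots.toFinset,
        Multiset.card (m'.filter (fun z => z ∈ Metric.ball ζ ε)) =
          Multiset.count ζ (m'.map f) := by
      intro ζ hζ
      rw [hfilterf ζ (Multiset.mem_toFinset.mp hζ), Multiset.count_map]
    rw [Finset.sum_congr rfl h1]
    have hsub : (m'.map f).toFinset ⊆ p.roots.toFinset := by
      intro x hx
      rw [Multiset.mem_toFinset] at hx ⊢
      obtain ⟨z, hz, rfl⟩ := Multiset.mem_map.mp hx
      exact (hfspec z hz).1
    rw [← Finset.sum_subset hsub
      (fun x _ hx => Multiset.count_eq_zero.mpr (fun h => hx (Multiset.mem_toFinset.mpr h)))]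
    rw [Multiset.toFinset_sum_count_eq, Multiset.card_map, hm'card]
  have hfinal : ∀ ζ ∈ p.roots.toFinset,
      Multiset.card (m'.filter (fun z => z ∈ Metric.ball ζ ε)) = 1 := by
    have h1 : ∑ _ζ ∈ p.roots.toFinset, 1 = n := by
      rw [Finset.sum_const, smul_eq_mul, mul_one, hdistinct]
    have h2 := (Finset.sum_eq_sum_iff_of_le
      (f := fun ζ => 1)
      (g := fun ζ => Multiset.card (m'.filter (fun z => z ∈ Metric.ball ζ ε)))
      (fun ζ hζ => hone ζ (Multiset.mem_toFinset.mp hζ))).mp (by rw [h1, hsum])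
    intro ζ hζ
    exact (h2 ζ hζ).symm
  exact hfinal ξ (Multiset.mem_toFinset.mpr hξ)
end

section
/- (Riesz projection is holomorphic.) Let X be a complex Banach space, U ⊆ ℂ open, and T : U → B(X) an analytic family of bounded operators. Let λ₀ ∈ ℂ and r > 0 be such that for every χ ∈ U and every ζ ∈ ℂ with |ζ − λ₀| = r, the operator T(χ) − ζ·I is invertible in B(X). Define the Riesz projection P(χ) := −(2πi)⁻¹ ∮_{|ζ−λ₀|=r} (T(χ) − ζ·I)⁻¹ dζ (contour integral over the positively oriented circle of radius r about λ₀). Then P(χ)² = P(χ) for every χ ∈ U, and the map χ ↦ P(χ) is analytic from U to B(X). -/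
open MeasureTheory intervalIntegral

section RieszAux

open Metric Function Complex

variable {X : Type*} [NormedAddCommGroup X] [NormedSpace ℂ X] [CompleteSpace X]

/-- The first resolvent identity. -/
lemma riesz_resolvent_id {A : Type*} [NormedRing A] [NormedAlgebra ℂ A] {S : A} {z w : ℂ}
    (hz : IsUnit (S - z • 1)) (hw : IsUnit (S - w • 1)) (hzw : z ≠ w) :
    Ring.inverse (S - z • 1) * Ring.inverse (S - w • 1)
      = (z - w)⁻¹ • (Ring.inverse (S - z • 1) - Ring.inverse (S - w • 1)) := by
  set a := S - z • 1 with ha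
  set b := S - w • 1 with hb
  have hba : b - a = (z - w) • 1 := by rw [ha, hb]; rw [sub_sub_sub_cancel_left, ← sub_smul]
  have key : Ring.inverse a - Ring.inverse b = (z - w) • (Ring.inverse a * Ring.inverse b) := by
    calc Ring.inverse a - Ring.inverse b
        = Ring.inverse a * (b * Ring.inverse b) - (Ring.inverse a * a) * Ring.inverse b := by
          rw [Ring.mul_inverse_cancel _ hw, Ring.inverse_mul_cancel _ hz, mul_one, one_mul]
      _ = Ring.inverse a * (b - a) * Ring.inverse b := by noncomm_ring
      _ = (z - w) • (Ring.inverse a * Ring.inverse b) := by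
          rw [hba, mul_smul_comm, smul_mul_assoc, mul_one]
  rw [key, smul_smul, inv_mul_cancel₀ (sub_ne_zero.2 hzw), one_smul]

set_option maxHeartbeats 400000 in
lemma riesz_resolvent_differentiableAt {S : X →L[ℂ] X} {ζ : ℂ} (h : IsUnit (S - ζ • 1)) :
    DifferentiableAt ℂ (fun z : ℂ => Ring.inverse (S - z • 1)) ζ := by
  have h1 : DifferentiableAt ℂ (fun z : ℂ => S - z • (1 : X →L[ℂ] X)) ζ :=
    (differentiableAt_const S).sub (differentiableAt_id.smul_const 1)
  have h2 : DifferentiableAt ℂ (@Ring.inverse (X →L[ℂ] X) _) (S - ζ • 1) :=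
    differentiableAt_inverse (𝕜 := ℂ) h
  exact h2.comp ζ h1

/-- Invertibility on a circle extends to a small closed annulus around it. -/
lemma riesz_exists_annulus_units {S : X →L[ℂ] X} {lam₀ : ℂ} {r : ℝ} (hr : 0 < r)
    (h : ∀ ζ : ℂ, ‖ζ - lam₀‖ = r → IsUnit (S - ζ • 1)) :
    ∃ ε > 0, ε < r ∧ ∀ ζ : ℂ, r - ε ≤ ‖ζ - lam₀‖ →
      ‖ζ - lam₀‖ ≤ r + ε → IsUnit (S - ζ • 1) := by
  have hcont : Continuous fun ζ : ℂ => S - ζ • 1 :=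
    continuous_const.sub (continuous_id.smul continuous_const)
  have hW : IsOpen {ζ : ℂ | IsUnit (S - ζ • 1)} := Units.isOpen.preimage hcont
  have hsub : sphere lam₀ r ⊆ {ζ : ℂ | IsUnit (S - ζ • 1)} := fun ζ hζ => by
    refine h ζ ?_
    simpa [Complex.dist_eq] using hζ
  obtain ⟨δ, hδ, hthick⟩ :=
    (isCompact_sphere lam₀ r).exists_thickening_subset_open hW hsub
  refine ⟨min (δ/2) (r/2), by positivity,
    (min_le_right _ _).trans_lt (half_lt_self hr), fun ζ h1 h2 => ?_⟩
  set ε := min (δ/2) (r/2) with hε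
  apply hthick
  rw [Metric.mem_thickening_iff]
  set aa := ‖ζ - lam₀‖ with haa
  have hεr : ε ≤ r / 2 := min_le_right _ _
  have hapos : 0 < aa := by
    have : r / 2 ≤ aa := by linarith
    linarith
  refine ⟨lam₀ + ((r / aa : ℝ) : ℂ) * (ζ - lam₀), ?_, ?_⟩
  · have : ‖((r / aa : ℝ) : ℂ) * (ζ - lam₀)‖ = r := by
      rw [norm_mul, Complex.norm_real, Real.norm_eq_abs, _root_.abs_of_nonneg (by positivity), ← haa,
        div_mul_cancel₀ _ hapos.ne']
    simpa [Complex.dist_eq, mem_sphere_iff_norm] using this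
  · have h3 : ζ - (lam₀ + ((r / aa : ℝ) : ℂ) * (ζ - lam₀))
        = (1 - ((r / aa : ℝ) : ℂ)) * (ζ - lam₀) := by ring
    have : dist ζ (lam₀ + ((r / aa : ℝ) : ℂ) * (ζ - lam₀)) = |aa - r| := by
      rw [Complex.dist_eq, h3, norm_mul, ← haa]
      have : ‖1 - ((r / aa : ℝ) : ℂ)‖ = |1 - r / aa| := by
        rw [show (1 : ℂ) - ((r / aa : ℝ) : ℂ) = ((1 - r / aa : ℝ) : ℂ) by push_cast; ring,
          Complex.norm_real, Real.norm_eq_abs]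
      rw [this]
      rw [show 1 - r / aa = (aa - r)/aa by field_simp, abs_div, _root_.abs_of_nonneg hapos.le,
        div_mul_cancel₀ _ hapos.ne']
    rw [this]
    have hab : |aa - r| ≤ ε := abs_le.mpr ⟨by linarith, by linarith⟩
    have : ε < δ := lt_of_le_of_lt (min_le_left _ _) (half_lt_self hδ)
    linarith

/-- Fubini for double interval integrals of continuous integrands. -/
lemma riesz_integral_integral_swap_cont {E : Type*} [NormedAddCommGroup E] [NormedSpace ℝ E]
    (H : ℝ → ℝ → E) (hH : Continuous (uncurry H)) {a b : ℝ} (hab : a ≤ b) :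
    (∫ θ in a..b, ∫ φ in a..b, H θ φ) = ∫ φ in a..b, ∫ θ in a..b, H θ φ := by
  have hint : Integrable (uncurry H)
      ((volume.restrict (Set.Ioc a b)).prod (volume.restrict (Set.Ioc a b))) := by
    rw [Measure.prod_restrict]
    exact (hH.continuousOn.integrableOn_compact (isCompact_Icc.prod isCompact_Icc)).mono_set
      (Set.prod_mono Set.Ioc_subset_Icc_self Set.Ioc_subset_Icc_self)
  calc (∫ θ in a..b, ∫ φ in a..b, H θ φ)
      = ∫ θ in Set.Ioc a b, ∫ φ in Set.Ioc a b, H θ φ := by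
        rw [intervalIntegral.integral_of_le hab]
        refine setIntegral_congr_fun measurableSet_Ioc fun θ _ => ?_
        rw [intervalIntegral.integral_of_le hab]
    _ = ∫ φ in Set.Ioc a b, ∫ θ in Set.Ioc a b, H θ φ := integral_integral_swap hint
    _ = ∫ φ in a..b, ∫ θ in a..b, H θ φ := by
        rw [intervalIntegral.integral_of_le hab]
        refine setIntegral_congr_fun measurableSet_Ioc fun φ _ => ?_
        rw [intervalIntegral.integral_of_le hab]

/-- Fubini for double circle integrals of continuous integrands. -/
lemma riesz_circleIntegral_swap {E : Type*} [NormedAddCommGroup E] [NormedSpace ℂ E]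
    [CompleteSpace E] (G : ℂ → ℂ → E) (c₁ c₂ : ℂ) (r₁ r₂ : ℝ)
    (hG : Continuous fun p : ℝ × ℝ => G (circleMap c₁ r₁ p.1) (circleMap c₂ r₂ p.2)) :
    (∮ z in C(c₁, r₁), ∮ w in C(c₂, r₂), G z w)
      = ∮ w in C(c₂, r₂), ∮ z in C(c₁, r₁), G z w := by
  have h2π : (0:ℝ) ≤ 2 * Real.pi := by positivity
  simp only [circleIntegral]
  have key := riesz_integral_integral_swap_cont
    (fun θ φ => deriv (circleMap c₁ r₁) θ •
      deriv (circleMap c₂ r₂) φ • G (circleMap c₁ r₁ θ) (circleMap c₂ r₂ φ)) ?_ h2π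
  · calc (∫ θ in (0:ℝ)..2 * Real.pi, deriv (circleMap c₁ r₁) θ •
          ∫ φ in (0:ℝ)..2 * Real.pi, deriv (circleMap c₂ r₂) φ • G (circleMap c₁ r₁ θ) (circleMap c₂ r₂ φ))
        = ∫ θ in (0:ℝ)..2 * Real.pi, ∫ φ in (0:ℝ)..2 * Real.pi, deriv (circleMap c₁ r₁) θ •
            deriv (circleMap c₂ r₂) φ • G (circleMap c₁ r₁ θ) (circleMap c₂ r₂ φ) := by
          refine intervalIntegral.integral_congr fun θ _ => ?_
          rw [← intervalIntegral.integral_smul]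
      _ = ∫ φ in (0:ℝ)..2 * Real.pi, ∫ θ in (0:ℝ)..2 * Real.pi, deriv (circleMap c₁ r₁) θ •
            deriv (circleMap c₂ r₂) φ • G (circleMap c₁ r₁ θ) (circleMap c₂ r₂ φ) := key
      _ = ∫ φ in (0:ℝ)..2 * Real.pi, deriv (circleMap c₂ r₂) φ •
            ∫ θ in (0:ℝ)..2 * Real.pi, deriv (circleMap c₁ r₁) θ • G (circleMap c₁ r₁ θ) (circleMap c₂ r₂ φ) := by
          refine intervalIntegral.integral_congr fun φ _ => ?_
          rw [← intervalIntegral.integral_smul]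
          refine intervalIntegral.integral_congr fun θ _ => ?_
          rw [smul_comm]
  · simp only [deriv_circleMap]
    apply Continuous.smul
    · exact ((continuous_circleMap 0 r₁).comp continuous_fst).mul continuous_const
    apply Continuous.smul
    · exact ((continuous_circleMap 0 r₂).comp continuous_snd).mul continuous_const
    exact hG

lemma riesz_circleIntegral_mul_const {A : Type*} [NormedRing A] [NormedAlgebra ℂ A]
    [CompleteSpace A] {f : ℂ → A} {c : ℂ} {ρ : ℝ} (hf : CircleIntegrable f c ρ) (B : A) :
    (∮ z in C(c, ρ), f z) * B = ∮ z in C(c, ρ), f z * B := by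
  have := (((ContinuousLinearMap.mul ℂ A).flip B).intervalIntegral_comp_comm hf.out).symm
  simpa [circleIntegral, smul_mul_assoc] using this

lemma riesz_circleIntegral_const_mul {A : Type*} [NormedRing A] [NormedAlgebra ℂ A]
    [CompleteSpace A] {f : ℂ → A} {c : ℂ} {ρ : ℝ} (hf : CircleIntegrable f c ρ) (B : A) :
    B * (∮ z in C(c, ρ), f z) = ∮ z in C(c, ρ), B * f z := by
  have := ((ContinuousLinearMap.mul ℂ A B).intervalIntegral_comp_comm hf.out).symm
  simpa [circleIntegral, mul_smul_comm] using this

/-- The key computation for idempotency of the Riesz projection: the product of the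
resolvent integrals over two concentric circles. -/
lemma riesz_key_idem {S : X →L[ℂ] X} {lam₀ : ℂ} {r r' : ℝ} (hr' : 0 < r') (hr'r : r' < r)
    (hu : ∀ z : ℂ, r' ≤ ‖z - lam₀‖ → ‖z - lam₀‖ ≤ r →
      IsUnit (S - z • 1)) :
    (∮ z in C(lam₀, r), Ring.inverse (S - z • 1)) * (∮ w in C(lam₀, r'), Ring.inverse (S - w • 1))
      = -((2 * Real.pi * Complex.I) • ∮ w in C(lam₀, r'), Ring.inverse (S - w • 1)) := by
  set Rz : ℂ → (X →L[ℂ] X) := fun z => Ring.inverse (S - z • 1) with hRz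
  have hrpos : (0:ℝ) < r := hr'.trans hr'r
  have habs : ∀ z : ℂ, ∀ ρ : ℝ, 0 < ρ → z ∈ sphere lam₀ ρ → ‖z - lam₀‖ = ρ := by
    intro z ρ hρ hz
    simpa [Complex.dist_eq] using hz
  have hmemu : ∀ ρ : ℝ, r' ≤ ρ → ρ ≤ r → ∀ z ∈ sphere lam₀ ρ, IsUnit (S - z • 1) := by
    intro ρ h1 h2 z hz
    have := habs z ρ (hr'.trans_le h1) hz
    exact hu z (by rw [this]; exact h1) (by rw [this]; exact h2)
  have hRcont : ∀ z : ℂ, IsUnit (S - z • 1) → ContinuousAt Rz z := fun z hz =>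
    (riesz_resolvent_differentiableAt hz).continuousAt
  have hCI : ∀ ρ : ℝ, r' ≤ ρ → ρ ≤ r → CircleIntegrable Rz lam₀ ρ := by
    intro ρ h1 h2
    exact ContinuousOn.circleIntegrable (hr'.le.trans h1)
      (fun z hz => (hRcont z (hmemu ρ h1 h2 z hz)).continuousWithinAt)
  have hCIr := hCI r hr'r.le le_rfl
  have hCIr' := hCI r' le_rfl hr'r.le
  set J : X →L[ℂ] X := ∮ z in C(lam₀, r), Rz z with hJ
  set J' : X →L[ℂ] X := ∮ w in C(lam₀, r'), Rz w with hJ'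
  have hne : ∀ z ∈ sphere lam₀ r, ∀ w : ℂ, ‖w - lam₀‖ ≤ r' → z ≠ w := by
    intro z hz w hw
    have hz' := habs z r hrpos hz
    intro h; rw [h] at hz'; rw [hz'] at hw; linarith
  have step2 : ∀ z ∈ sphere lam₀ r, Rz z * J' = -(∮ w in C(lam₀, r'), (z - w)⁻¹ • Rz w) := by
    intro z hz
    have hz' := habs z r hrpos hz
    rw [riesz_circleIntegral_const_mul hCIr' (Rz z)]
    have e2 : (∮ w in C(lam₀, r'), Rz z * Rz w)
        = ∮ w in C(lam₀, r'), ((z - w)⁻¹ • Rz z - (z - w)⁻¹ • Rz w) := by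
      refine circleIntegral.integral_congr hr'.le fun w hw => ?_
      have hw' := habs w r' hr' hw
      have hzu : IsUnit (S - z • 1) := hmemu r hr'r.le le_rfl z hz
      have hwu : IsUnit (S - w • 1) := hmemu r' le_rfl hr'r.le w hw
      rw [hRz]
      simp only []
      rw [riesz_resolvent_id hzu hwu (hne z hz w (le_of_eq hw')), smul_sub]
    rw [e2]
    have hCI1 : CircleIntegrable (fun w => (z - w)⁻¹ • Rz z) lam₀ r' := by
      refine ContinuousOn.circleIntegrable hr'.le ?_
      refine ContinuousOn.smul (f := fun w => (z - w)⁻¹) (g := fun _ => Rz z) ?_ continuousOn_const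
      refine ContinuousOn.inv₀ (continuousOn_const.sub continuousOn_id) fun w hw => ?_
      exact sub_ne_zero.2 (hne z hz w (le_of_eq (habs w r' hr' hw)))
    have hCI2 : CircleIntegrable (fun w => (z - w)⁻¹ • Rz w) lam₀ r' := by
      refine ContinuousOn.circleIntegrable hr'.le ?_
      refine ContinuousOn.smul (f := fun w => (z - w)⁻¹) (g := Rz) ?_ fun w hw =>
        (hRcont w (hmemu r' le_rfl hr'r.le w hw)).continuousWithinAt
      refine ContinuousOn.inv₀ (continuousOn_const.sub continuousOn_id) fun w hw => ?_
      exact sub_ne_zero.2 (hne z hz w (le_of_eq (habs w r' hr' hw)))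
    rw [circleIntegral.integral_sub hCI1 hCI2]
    have e3 : (∮ w in C(lam₀, r'), (z - w)⁻¹ • Rz z) = 0 := by
      rw [circleIntegral.integral_smul_const]
      have : (∮ w in C(lam₀, r'), (z - w)⁻¹) = 0 := by
        refine circleIntegral_eq_zero_of_differentiable_on_off_countable hr'.le
          Set.countable_empty ?_ ?_
        · refine ContinuousOn.inv₀ (continuousOn_const.sub continuousOn_id) fun w hw => ?_
          refine sub_ne_zero.2 (hne z hz w ?_)
          simpa [Complex.dist_eq] using hw
        · intro w hw
          refine DifferentiableAt.inv ((differentiableAt_const z).sub differentiableAt_id) ?_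
          refine sub_ne_zero.2 (hne z hz w ?_)
          have : dist w lam₀ < r' := hw.1
          simpa [Complex.dist_eq] using this.le
      rw [this, zero_smul]
    rw [e3, zero_sub]
  have step1 : J * J' = -(∮ z in C(lam₀, r), ∮ w in C(lam₀, r'), (z - w)⁻¹ • Rz w) := by
    rw [hJ, riesz_circleIntegral_mul_const hCIr J']
    have : (∮ z in C(lam₀, r), Rz z * J')
        = ∮ z in C(lam₀, r), -(∮ w in C(lam₀, r'), (z - w)⁻¹ • Rz w) :=
      circleIntegral.integral_congr hrpos.le fun z hz => step2 z hz
    rw [this]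
    have : (∮ z in C(lam₀, r), -(∮ w in C(lam₀, r'), (z - w)⁻¹ • Rz w))
        = ∮ z in C(lam₀, r), ((-1 : ℂ) • ∮ w in C(lam₀, r'), (z - w)⁻¹ • Rz w) := by
      simp
    rw [this, circleIntegral.integral_smul, neg_one_smul]
  have hswap : (∮ z in C(lam₀, r), ∮ w in C(lam₀, r'), (z - w)⁻¹ • Rz w)
      = ∮ w in C(lam₀, r'), ∮ z in C(lam₀, r), (z - w)⁻¹ • Rz w := by
    refine riesz_circleIntegral_swap (fun z w => (z - w)⁻¹ • Rz w) lam₀ lam₀ r r' ?_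
    have h1 : Continuous fun p : ℝ × ℝ => (circleMap lam₀ r p.1 - circleMap lam₀ r' p.2)⁻¹ := by
      refine Continuous.inv₀ (((continuous_circleMap _ _).comp continuous_fst).sub
        ((continuous_circleMap _ _).comp continuous_snd)) fun p => ?_
      refine sub_ne_zero.2 (hne _ (circleMap_mem_sphere lam₀ hrpos.le p.1) _ ?_)
      rw [circleMap_sub_center, norm_circleMap_zero]
      exact (_root_.abs_of_nonneg hr'.le).le
    have h2 : Continuous fun p : ℝ × ℝ => Rz (circleMap lam₀ r' p.2) := by
      rw [continuous_iff_continuousAt]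
      intro p
      exact ContinuousAt.comp (g := Rz) (f := fun p : ℝ × ℝ => circleMap lam₀ r' p.2) (x := p)
        (hRcont _ (hmemu r' le_rfl hr'r.le _ (circleMap_mem_sphere lam₀ hr'.le p.2)))
        (((continuous_circleMap _ _).comp continuous_snd).continuousAt)
    exact h1.smul h2
  have hinner : ∀ w ∈ sphere lam₀ r',
      (∮ z in C(lam₀, r), (z - w)⁻¹ • Rz w) = (2 * Real.pi * Complex.I) • Rz w := by
    intro w hw
    rw [circleIntegral.integral_smul_const]
    have hwball : w ∈ ball lam₀ r := by
      have := habs w r' hr' hw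
      rw [mem_ball, Complex.dist_eq, this]; exact hr'r
    rw [circleIntegral.integral_sub_inv_of_mem_ball hwball]
  rw [step1, hswap]
  have : (∮ w in C(lam₀, r'), ∮ z in C(lam₀, r), (z - w)⁻¹ • Rz w)
      = ∮ w in C(lam₀, r'), (2 * Real.pi * Complex.I : ℂ) • Rz w :=
    circleIntegral.integral_congr hr'.le fun w hw => hinner w hw
  rw [this, circleIntegral.integral_smul]

end RieszAux

/-- The Riesz projection `P(χ) = −(2πi)⁻¹ ∮_{|ζ−lam₀|=r} (T(χ) − ζ·I)⁻¹ dζ`, the contour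
integral being over the positively oriented circle of radius `r` about `lam₀`. -/
noncomputable def rieszProjection {X : Type*} [NormedAddCommGroup X] [NormedSpace ℂ X]
    (T : ℂ → X →L[ℂ] X) (lam₀ : ℂ) (r : ℝ) (χ : ℂ) : X →L[ℂ] X :=
  (-(2 * (Real.pi : ℂ) * Complex.I)⁻¹) •
    ∫ θ in (0:ℝ)..(2 * Real.pi),
      (Complex.I * (r : ℂ) * Complex.exp ((θ : ℂ) * Complex.I)) •
        Ring.inverse (T χ - (lam₀ + (r : ℂ) * Complex.exp ((θ : ℂ) * Complex.I)) • 1)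

section RieszAux2

open Metric Function Complex

variable {X : Type*} [NormedAddCommGroup X] [NormedSpace ℂ X] [CompleteSpace X]

lemma rieszProjection_eq_circleIntegral (T : ℂ → X →L[ℂ] X) (lam₀ : ℂ) (r : ℝ) (χ : ℂ) :
    rieszProjection T lam₀ r χ = (-(2 * (Real.pi : ℂ) * Complex.I)⁻¹) •
      ∮ z in C(lam₀, r), Ring.inverse (T χ - z • 1) := by
  unfold rieszProjection circleIntegral
  congr 1
  refine intervalIntegral.integral_congr fun θ _ => ?_
  simp only [deriv_circleMap, circleMap, zero_add]
  congr 1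
  ring

lemma riesz_differentiableAt {U : Set ℂ} (hU : IsOpen U) {T : ℂ → X →L[ℂ] X}
    (hT : AnalyticOnNhd ℂ T U) {lam₀ : ℂ} {r : ℝ} (hr : 0 < r)
    (hinv : ∀ χ ∈ U, ∀ ζ : ℂ, ‖ζ - lam₀‖ = r → IsUnit (T χ - ζ • 1))
    {χ₀ : ℂ} (hχ₀ : χ₀ ∈ U) :
    DifferentiableAt ℂ (rieszProjection T lam₀ r) χ₀ := by
  haveI : SecondCountableTopologyEither ℝ (X →L[ℂ] X) := ⟨Or.inl inferInstance⟩
  obtain ⟨δ₀, hδ₀, hball₀⟩ := Metric.isOpen_iff.mp hU χ₀ hχ₀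
  set δ := δ₀ / 2 with hδdef
  have hδ : 0 < δ := by positivity
  have hball : closedBall χ₀ δ ⊆ U :=
    (closedBall_subset_ball (by simpa [hδdef] using half_lt_self hδ₀)).trans hball₀
  set ζf : ℝ → ℂ := fun θ => lam₀ + (r : ℂ) * Complex.exp ((θ : ℂ) * Complex.I) with hζf
  have hζabs : ∀ θ : ℝ, ‖ζf θ - lam₀‖ = r := by
    intro θ
    simp only [hζf, add_sub_cancel_left, norm_mul, Complex.norm_real, Real.norm_eq_abs, Complex.norm_exp,
      Complex.mul_I_re, Complex.ofReal_im, neg_zero, Real.exp_zero, mul_one]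
    exact abs_of_nonneg hr.le
  have hunit : ∀ χ ∈ U, ∀ θ : ℝ, IsUnit (T χ - ζf θ • 1) := fun χ hχ θ =>
    hinv χ hχ _ (hζabs θ)
  set G : ℂ × ℝ → (X →L[ℂ] X) := fun p => Ring.inverse (T p.1 - ζf p.2 • 1) with hG
  have hTc : ∀ χ ∈ U, ContinuousAt T χ := fun χ hχ => (hT χ hχ).continuousAt
  have hGc : ∀ p : ℂ × ℝ, p.1 ∈ U → ContinuousAt G p := by
    intro p hp
    have hinner : ContinuousAt (fun q : ℂ × ℝ => T q.1 - ζf q.2 • 1) p := by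
      apply ContinuousAt.sub
      · exact ContinuousAt.comp (g := T) (f := fun q : ℂ × ℝ => q.1)
          (hTc _ hp) continuous_fst.continuousAt
      · apply Continuous.continuousAt
        have : Continuous ζf := by
          apply continuous_const.add
          exact continuous_const.mul ((Complex.continuous_ofReal.mul continuous_const).cexp)
        exact ((this.comp continuous_snd).smul continuous_const)
    exact ContinuousAt.comp (g := Ring.inverse) (f := fun q : ℂ × ℝ => T q.1 - ζf q.2 • 1)
      (by simpa using NormedRing.inverse_continuousAt (hunit p.1 hp p.2).unit) hinner
  set F : ℂ → ℝ → (X →L[ℂ] X) := fun χ θ =>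
    (Complex.I * (r : ℂ) * Complex.exp ((θ : ℂ) * Complex.I)) •
      Ring.inverse (T χ - ζf θ • 1) with hF
  set F' : ℂ → ℝ → (X →L[ℂ] X) := fun χ θ =>
    (Complex.I * (r : ℂ) * Complex.exp ((θ : ℂ) * Complex.I)) •
      (-(Ring.inverse (T χ - ζf θ • 1) * deriv T χ * Ring.inverse (T χ - ζf θ • 1))) with hF'
  have hcoef : Continuous fun θ : ℝ => Complex.I * (r : ℂ) * Complex.exp ((θ : ℂ) * Complex.I) :=
    continuous_const.mul ((Complex.continuous_ofReal.mul continuous_const).cexp)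
  have hderiv : ∀ χ ∈ U, ∀ θ : ℝ, HasDerivAt (fun χ => F χ θ) (F' χ θ) χ := by
    intro χ hχ θ
    have hTd : HasDerivAt T (deriv T χ) χ := ((hT χ hχ).differentiableAt).hasDerivAt
    have h1 : HasDerivAt (fun χ => T χ - ζf θ • 1) (deriv T χ) χ := hTd.sub_const _
    have hu := hunit χ hχ θ
    have h2 := (hasFDerivAt_ringInverse (𝕜 := ℂ) hu.unit).comp_hasDerivAt_of_eq χ h1
      hu.unit_spec
    have h3 : (↑hu.unit⁻¹ : X →L[ℂ] X) = Ring.inverse (T χ - ζf θ • 1) := by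
      rw [← Ring.inverse_unit, hu.unit_spec]
    have h4 : HasDerivAt (fun χ => Ring.inverse (T χ - ζf θ • 1))
        (-(Ring.inverse (T χ - ζf θ • 1) * deriv T χ * Ring.inverse (T χ - ζf θ • 1))) χ := by
      exact h2.congr_deriv (by simp [ContinuousLinearMap.mulLeftRight_apply, h3])
    exact HasDerivAt.const_smul (f := fun χ => Ring.inverse (T χ - ζf θ • 1))
      (Complex.I * (r : ℂ) * Complex.exp ((θ : ℂ) * Complex.I)) h4
  have hF'cont : ContinuousOn (fun p : ℂ × ℝ => F' p.1 p.2)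
      (closedBall χ₀ δ ×ˢ Set.Icc (0:ℝ) (2 * Real.pi)) := by
    intro p hp
    have hp1 : p.1 ∈ U := hball hp.1
    apply ContinuousAt.continuousWithinAt
    apply ContinuousAt.smul (f := fun q : ℂ × ℝ => Complex.I * (r : ℂ) * Complex.exp ((q.2 : ℂ) * Complex.I))
      (g := fun q : ℂ × ℝ => -(Ring.inverse (T q.1 - ζf q.2 • 1) * deriv T q.1 *
        Ring.inverse (T q.1 - ζf q.2 • 1)))
    · exact (hcoef.comp continuous_snd).continuousAt
    apply ContinuousAt.neg
    apply ContinuousAt.mul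
    apply ContinuousAt.mul
    · exact hGc p hp1
    · exact ContinuousAt.comp (g := deriv T) (f := fun q : ℂ × ℝ => q.1)
        ((hT.deriv p.1 hp1).continuousAt) continuous_fst.continuousAt
    · exact hGc p hp1
  obtain ⟨C, hC⟩ := (isCompact_closedBall χ₀ δ |>.prod isCompact_Icc).exists_bound_of_continuousOn
    hF'cont
  have hFθcont : ∀ χ ∈ U, Continuous fun θ => F χ θ := by
    intro χ hχ
    apply hcoef.smul
    rw [continuous_iff_continuousAt]
    intro θ
    exact ContinuousAt.comp (g := G) (f := fun θ : ℝ => ((χ, θ) : ℂ × ℝ)) (hGc (χ, θ) hχ)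
      (continuous_const.prodMk continuous_id).continuousAt
  have key := intervalIntegral.hasDerivAt_integral_of_dominated_loc_of_deriv_le
    (F := F) (F' := F') (x₀ := χ₀) (a := 0) (b := 2 * Real.pi) (μ := volume)
    (bound := fun _ => C) (ball_mem_nhds χ₀ hδ)
    (Filter.eventually_iff_exists_mem.mpr ⟨ball χ₀ δ, ball_mem_nhds χ₀ hδ,
      fun χ hχ => ((hFθcont χ (hball (ball_subset_closedBall hχ))).aestronglyMeasurable)⟩)
    ((hFθcont χ₀ hχ₀).intervalIntegrable _ _)
    ?_ ?_ intervalIntegrable_const ?_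
  · exact DifferentiableAt.const_smul (f := fun χ => ∫ θ in (0:ℝ)..(2 * Real.pi), F χ θ)
      (key.2.differentiableAt) (-(2 * (Real.pi : ℂ) * Complex.I)⁻¹)
  · apply Continuous.aestronglyMeasurable
    apply hcoef.smul
    apply Continuous.neg
    rw [continuous_iff_continuousAt]
    intro θ
    have hGθ : ContinuousAt (fun θ : ℝ => G (χ₀, θ)) θ :=
      ContinuousAt.comp (g := G) (f := fun θ : ℝ => ((χ₀, θ) : ℂ × ℝ)) (hGc (χ₀, θ) hχ₀)
        (continuous_const.prodMk continuous_id).continuousAt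
    exact (hGθ.mul continuousAt_const).mul hGθ
  · refine Filter.Eventually.of_forall fun θ hθ χ hχ => ?_
    have hθ' : θ ∈ Set.Icc (0:ℝ) (2 * Real.pi) := by
      have h2π : (0:ℝ) ≤ 2 * Real.pi := by positivity
      rw [Set.uIoc_of_le h2π] at hθ
      exact ⟨hθ.1.le, hθ.2⟩
    exact hC (χ, θ) ⟨ball_subset_closedBall hχ, hθ'⟩
  · refine Filter.Eventually.of_forall fun θ _ χ hχ => ?_
    exact hderiv χ (hball (ball_subset_closedBall hχ)) θ

end RieszAux2

/-- Riesz projection is holomorphic: if `T : U → B(X)` is analytic and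
`T(χ) − ζ·I` is invertible for all `χ ∈ U` and all `ζ` on the circle `|ζ − lam₀| = r`,
then the Riesz projection `P(χ)` satisfies `P(χ)² = P(χ)` for all `χ ∈ U` and
`χ ↦ P(χ)` is analytic on `U`. -/
theorem rieszProjection_idempotent_and_analytic
    {X : Type*} [NormedAddCommGroup X] [NormedSpace ℂ X] [CompleteSpace X]
    (U : Set ℂ) (hU : IsOpen U) (T : ℂ → X →L[ℂ] X) (hT : AnalyticOnNhd ℂ T U)
    (lam₀ : ℂ) (r : ℝ) (hr : 0 < r)
    (hinv : ∀ χ ∈ U, ∀ ζ : ℂ, ‖ζ - lam₀‖ = r → IsUnit (T χ - ζ • 1)) :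
    (∀ χ ∈ U,
      rieszProjection T lam₀ r χ * rieszProjection T lam₀ r χ = rieszProjection T lam₀ r χ) ∧
    AnalyticOnNhd ℂ (rieszProjection T lam₀ r) U := by
  constructor
  · intro χ hχ
    obtain ⟨ε, hε, hεr, hann⟩ := riesz_exists_annulus_units hr (hinv χ hχ)
    set r' : ℝ := r - ε with hr'def
    have hr' : 0 < r' := by rw [hr'def]; linarith
    have hr'r : r' < r := by rw [hr'def]; linarith
    have hu : ∀ z : ℂ, r' ≤ ‖z - lam₀‖ → ‖z - lam₀‖ ≤ r →
        IsUnit (T χ - z • 1) := fun z h1 h2 => hann z h1 (by linarith)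
    set Rz : ℂ → (X →L[ℂ] X) := fun z => Ring.inverse (T χ - z • 1) with hRz
    have hmem : ∀ z : ℂ, z ∈ Metric.closedBall lam₀ r \ Metric.ball lam₀ r' →
        r' ≤ ‖z - lam₀‖ ∧ ‖z - lam₀‖ ≤ r := by
      intro z hz
      constructor
      · have := hz.2
        rw [Metric.mem_ball, Complex.dist_eq, not_lt] at this
        exact this
      · have := hz.1
        rwa [Metric.mem_closedBall, Complex.dist_eq] at this
    have hEqJ : (∮ z in C(lam₀, r), Rz z) = ∮ z in C(lam₀, r'), Rz z := by
      refine Complex.circleIntegral_eq_of_differentiable_on_annulus_off_countable hr' hr'r.le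
        Set.countable_empty ?_ ?_
      · intro z hz
        exact (riesz_resolvent_differentiableAt
          (hu z (hmem z hz).1 (hmem z hz).2)).continuousAt.continuousWithinAt
      · intro z hz
        have hz' : z ∈ Metric.closedBall lam₀ r \ Metric.ball lam₀ r' :=
          ⟨Metric.ball_subset_closedBall hz.1.1,
            fun h => hz.1.2 (Metric.ball_subset_closedBall h)⟩
        exact riesz_resolvent_differentiableAt (hu z (hmem z hz').1 (hmem z hz').2)
    have hkey := riesz_key_idem (S := T χ) hr' hr'r hu
    rw [rieszProjection_eq_circleIntegral]
    have h2πI : (2 * (Real.pi : ℂ) * Complex.I) ≠ 0 := Complex.two_pi_I_ne_zero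
    have hscal : -((-(2 * (Real.pi : ℂ) * Complex.I)⁻¹) * (-(2 * (Real.pi : ℂ) * Complex.I)⁻¹)
        * (2 * (Real.pi : ℂ) * Complex.I)) = -(2 * (Real.pi : ℂ) * Complex.I)⁻¹ := by
      field_simp
    set c : ℂ := -(2 * (Real.pi : ℂ) * Complex.I)⁻¹ with hc
    rw [← hRz] at hkey hEqJ ⊢
    set J : X →L[ℂ] X := ∮ z in C(lam₀, r), Rz z with hJdef
    set J' : X →L[ℂ] X := ∮ z in C(lam₀, r'), Rz z with hJ'def
    calc (c • J) * (c • J) = (c * c) • (J * J) := smul_mul_smul_comm c J c J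
      _ = (c * c) • (J * J') := by rw [hEqJ]
      _ = (c * c) • (-((2 * Real.pi * Complex.I) • J')) := by rw [hkey]
      _ = (-(c * c * (2 * Real.pi * Complex.I))) • J' := by
          rw [smul_neg, smul_smul, ← neg_smul]
      _ = c • J' := by rw [hscal]
      _ = c • J := by rw [hEqJ]
  · exact DifferentiableOn.analyticOnNhd
      (fun χ hχ => (riesz_differentiableAt hU hT hr hinv hχ).differentiableWithinAt) hU
end
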